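/- Let ℓ ≥ 0 and r ≥ 1 be integers and let s_1, …, s_r be nonnegative integers. Then the number of occurrences of the word 0·1^ℓ as a subword of the word 0^{s_r} 1 0^{s_{r-1}} 1 ⋯ 0^{s_2} 1 0^{s_1} 1^ℓ equals Σ_{j=1}^{r} s_j · C(ℓ+j−1, j−1), where C(·,·) denotes the usual binomial coefficient. -/

import Mathlib

open List Nat

def zeroBlockWord (s : ℕ → ℕ) (ℓ : ℕ) : ℕ → List Bool
  | 0 => List.replicate ℓ true
  | 1 => List.replicate (s 1) false ++ List.replicate ℓ true
  | (r + 2) => List.replicate (s (r + 2)) false ++ true :: zeroBlockWord s ℓ (r + 1)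

lemma count_map_cons (b : Bool) (v : List Bool) (L : List (List Bool)) :
    (L.map (List.cons b)).count (b :: v) = L.count v := by
  induction L with
  | nil => simp
  | cons x L ih => simp [List.count_cons, ih, List.cons_eq_cons]

lemma count_rep_true (w : List Bool) : ∀ ℓ,
    w.sublists'.count (List.replicate ℓ true) = Nat.choose (w.count true) ℓ := by
  induction w with
  | nil => intro ℓ; cases ℓ <;> simp
  | cons a w ih =>
    intro ℓ
    rw [sublists'_cons, count_append, ih]
    cases a with
    | false =>
      have h0 : ((w.sublists').map (List.cons false)).count (List.replicate ℓ true) = 0 := by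
        rw [count_eq_zero]
        intro h
        simp only [mem_map] at h
        obtain ⟨x, -, hx⟩ := h
        cases ℓ with
        | zero => simp at hx
        | succ ℓ => rw [replicate_succ] at hx; exact Bool.noConfusion (List.head_eq_of_cons_eq hx)
      simp [h0]
    | true =>
      cases ℓ with
      | zero =>
        have h0 : ((w.sublists').map (List.cons true)).count ([] : List Bool) = 0 := by
          rw [count_eq_zero]; intro h; simp at h
        simp [h0]
      | succ ℓ =>
        rw [replicate_succ, count_map_cons, ih]
        simp [count_cons, Nat.choose_succ_succ, Nat.add_comm]

lemma count_map_cons_ne (b c : Bool) (hbc : b ≠ c) (v : List Bool) (L : List (List Bool)) :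
    (L.map (List.cons b)).count (c :: v) = 0 := by
  rw [count_eq_zero]
  intro h
  simp only [mem_map] at h
  obtain ⟨x, -, hx⟩ := h
  exact hbc (List.head_eq_of_cons_eq hx)

lemma count_false_rep_cons_true (w : List Bool) (ℓ : ℕ) :
    ((true :: w).sublists').count (false :: List.replicate ℓ true)
      = w.sublists'.count (false :: List.replicate ℓ true) := by
  rw [sublists'_cons, count_append, count_map_cons_ne true false (by simp)]
  omega

lemma count_false_rep_rep_append (w : List Bool) (ℓ : ℕ) : ∀ n,
    ((List.replicate n false ++ w).sublists').count (false :: List.replicate ℓ true)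
      = n * Nat.choose (w.count true) ℓ
        + w.sublists'.count (false :: List.replicate ℓ true) := by
  intro n
  induction n with
  | zero => simp
  | succ n ih =>
    rw [replicate_succ, cons_append, sublists'_cons, count_append, ih, count_map_cons,
      count_rep_true]
    have : (List.replicate n false ++ w).count true = w.count true := by
      simp [count_append, count_replicate]
    rw [this]
    ring

lemma count_true_zeroBlockWord (s : ℕ → ℕ) (ℓ : ℕ) : ∀ m,
    (zeroBlockWord s ℓ (m + 1)).count true = ℓ + m := by
  intro m
  induction m with
  | zero => simp [zeroBlockWord, count_append, count_replicate]
  | succ m ih =>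
    show (List.replicate (s (m + 2)) false ++ true :: zeroBlockWord s ℓ (m + 1)).count true = _
    rw [count_append, count_cons, ih]
    simp [count_replicate]
    omega

lemma main_aux (s : ℕ → ℕ) (ℓ : ℕ) : ∀ m,
    ((zeroBlockWord s ℓ (m + 1)).sublists').count (false :: List.replicate ℓ true)
      = ∑ j ∈ Finset.Icc 1 (m + 1), s j * Nat.choose (ℓ + j - 1) (j - 1) := by
  intro m
  induction m with
  | zero =>
    show ((List.replicate (s 1) false ++ List.replicate ℓ true).sublists').count _ = _
    rw [count_false_rep_rep_append]
    have h0 : ((List.replicate ℓ true).sublists').count (false :: List.replicate ℓ true) = 0 := by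
      rw [count_eq_zero]
      intro h
      rw [mem_sublists'] at h
      have := h.subset (List.mem_cons_self (a := false))
      simp [eq_comm] at this
    rw [h0]
    simp [count_replicate, Nat.choose_self]
  | succ m ih =>
    show ((List.replicate (s (m + 2)) false ++ true :: zeroBlockWord s ℓ (m + 1)).sublists').count _ = _
    rw [count_false_rep_rep_append, count_false_rep_cons_true, ih]
    rw [Finset.sum_Icc_succ_top (by omega : 1 ≤ m + 2)]
    have h1 : (true :: zeroBlockWord s ℓ (m + 1)).count true = ℓ + m + 1 := by
      rw [count_cons, count_true_zeroBlockWord]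
      simp
    rw [h1]
    have h2 : Nat.choose (ℓ + m + 1) ℓ = Nat.choose (ℓ + (m + 2) - 1) (m + 2 - 1) := by
      have : ℓ + (m + 2) - 1 = ℓ + m + 1 := by omega
      rw [this, show m + 2 - 1 = m + 1 by omega,
        show m + 1 = (ℓ + m + 1) - ℓ by omega]
      exact (Nat.choose_symm (by omega)).symm
    rw [h2]
    ring

lemma cnt_perm {l₁ l₂ : List (List Bool)} (h : l₁.Perm l₂) (a : List Bool) :
    l₁.count a = l₂.count a := h.countP_eq _

theorem count_subword_zeroBlockWord (ℓ r : ℕ) (hr : 1 ≤ r) (s : ℕ → ℕ) :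
    ((zeroBlockWord s ℓ r).sublists).count (false :: List.replicate ℓ true) =
      ∑ j ∈ Finset.Icc 1 r, s j * Nat.choose (ℓ + j - 1) (j - 1) := by
  obtain ⟨m, rfl⟩ := Nat.exists_eq_add_of_le hr
  rw [cnt_perm (List.sublists_perm_sublists' _), show 1 + m = m + 1 by omega, main_aux]
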